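/- In a vertically integrated economy with one final good and linear production, if demand at stage 0 follows an AR(1) with persistence ρ and each stage n holds end-of-period inventories I_n(E_t D^n_{t+1}) for a differentiable function I_n, then output at stage n satisfies Y^n_t = D^0_t + Σ_{i=0}^n ΔF^i_t[D^0_t], where F^n_t is defined recursively by F^n_t[x_t] = I_n(E_t[x_{t+1} + Σ_{i=0}^{n-1}(F^i_{t+1}[x_{t+1}] − F^i_t[x_t])]) with F^0_t[x_t] = I_0(E_t[x_{t+1}]) and ΔF^n_t[x] = F^n_t[x_t] − F^n_{t−1}[x_{t−1}]. -/

import Mathlib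

/-- In a vertically integrated economy with linear production,
AR(1) final demand, and inventory target functions `Iv n` applied to expected
future demand, stage-n output satisfies
`Y^n_t = D^0_t + Σ_{i=0}^n (F^i_t − F^i_{t−1})` where `F` is the recursive
operator of the proposition (specialized to the argument `x = D^0`).
Here `Ex t x` denotes the conditional expectation `E_t[x_{t+1}]`. -/
theorem vertically_integrated_sectoral_output
    (D : ℕ → ℤ → ℝ)               -- D n t : demand faced by stage n at time t
    (Y : ℕ → ℤ → ℝ)               -- Y n t : output of stage n at time t
    (Iv : ℕ → ℝ → ℝ)              -- inventory target functions
    (hIdiff : ∀ n, Differentiable ℝ (Iv n))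
    (Ex : ℤ → (ℤ → ℝ) → ℝ)        -- Ex t x = E_t [x_{t+1}]
    (ρ Dbar : ℝ) (ε : ℤ → ℝ)
    (hρ : -1 < ρ ∧ ρ < 1)
    (hAR : ∀ t, D 0 t = (1 - ρ) * Dbar + ρ * D 0 (t - 1) + ε t)
    (F : ℕ → ℤ → ℝ)
    (hF0 : ∀ t, F 0 t = Iv 0 (Ex t (D 0)))
    (hF : ∀ n t, F (n + 1) t =
      Iv (n + 1) (Ex t (fun s => D 0 s +
        ∑ i ∈ Finset.range (n + 1), (F i s - F i (s - 1)))))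
    -- stage-n output is demand plus the change in target inventories
    (hY : ∀ n t, Y n t = D n t + Iv n (Ex t (D n)) - Iv n (Ex (t - 1) (D n)))
    -- market clearing: stage n output is the demand faced by stage n+1
    (hMC : ∀ n t, D (n + 1) t = Y n t) :
    ∀ n t, Y n t = D 0 t + ∑ i ∈ Finset.range (n + 1), (F i t - F i (t - 1)) := by
  intro n
  induction n with
  | zero =>
    intro t
    simp [hY 0 t, hF0, Finset.sum_range_one]
    ring
  | succ n ih =>
    intro t
    have hDfun : D (n + 1) = fun s => D 0 s +
        ∑ i ∈ Finset.range (n + 1), (F i s - F i (s - 1)) := by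
      funext s
      rw [hMC n s, ih s]
    rw [hY (n + 1) t, hDfun]
    simp only [Finset.sum_range_succ, hF n t, hF n (t - 1)]
    ring
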